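/- arXiv:2104.05093 — 4 statements merged into one kernel-verified Lean document; each statement's English description precedes it below -/
import Mathlib

section
/- Let S be a sum of finitely many independent geometric random variables (possibly with different parameters α_i ∈ [0,1)). Then the distribution of S is log-concave: for every integer t ≥ 1, P(S = t+1) · P(S = t-1) ≤ P(S = t)^2. -/
open MeasureTheory ProbabilityTheory

/-- Cross log-concavity property. -/
private def CrossLC (p : ℕ → ℝ) : Prop := ∀ a b, b ≤ a → p (a+1) * p b ≤ p a * p (b+1)

private lemma crossLC_iterate {p : ℕ → ℝ} (hp : CrossLC p) :
    ∀ m x y, y ≤ x → p (x + m) * p y ≤ p x * p (y + m) := by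
  intro m
  induction m with
  | zero => intro x y _; simp [mul_comm]
  | succ m ih =>
    intro x y hyx
    rcases eq_or_lt_of_le hyx with h | h
    · subst h; ring_nf; rfl
    · calc p (x + (m+1)) * p y = p ((x + m) + 1) * p y := by ring_nf
        _ ≤ p (x + m) * p (y + 1) := hp (x+m) y (by omega)
        _ ≤ p x * p ((y+1) + m) := ih x (y+1) (by omega)
        _ = p x * p (y + (m+1)) := by ring_nf

/-- convolution with a geometric sequence -/
private def convG (a : ℝ) (p : ℕ → ℝ) (t : ℕ) : ℝ :=
  ∑ k ∈ Finset.range (t+1), a ^ k * (1 - a) * p (t - k)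

private lemma convG_nonneg {a : ℝ} {p : ℕ → ℝ} (ha0 : 0 ≤ a) (ha1 : a ≤ 1)
    (hp : ∀ k, 0 ≤ p k) (t : ℕ) : 0 ≤ convG a p t := by
  refine Finset.sum_nonneg fun k _ => ?_
  exact mul_nonneg (mul_nonneg (pow_nonneg ha0 k) (by linarith)) (hp (t - k))

private lemma convG_succ (a : ℝ) (p : ℕ → ℝ) (t : ℕ) :
    convG a p (t+1) = (1 - a) * p (t+1) + a * convG a p t := by
  unfold convG
  rw [Finset.sum_range_succ', add_comm]
  congr 1
  · simp
  · rw [Finset.mul_sum]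
    refine Finset.sum_congr rfl fun k _ => ?_
    have h : t + 1 - (k+1) = t - k := by omega
    rw [h]; ring

private lemma convG_cross {a : ℝ} {p : ℕ → ℝ} (ha0 : 0 ≤ a) (ha1 : a ≤ 1)
    (hp0 : ∀ k, 0 ≤ p k) (hp : CrossLC p) {m n : ℕ} (hmn : m ≤ n) :
    p (n+1) * convG a p m ≤ p (m+1) * convG a p n := by
  rw [convG, convG, Finset.mul_sum, Finset.mul_sum]
  calc ∑ k ∈ Finset.range (m+1), p (n+1) * (a ^ k * (1-a) * p (m - k))
      ≤ ∑ k ∈ Finset.range (m+1), p (m+1) * (a ^ k * (1-a) * p (n - k)) := by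
        refine Finset.sum_le_sum fun k hk => ?_
        have hk' : k ≤ m := by simpa [Nat.lt_succ_iff] using hk
        have key : p (n+1) * p (m - k) ≤ p (m+1) * p (n - k) := by
          have h := crossLC_iterate hp (n - m) (m+1) (m - k) (by omega)
          have e1 : m + 1 + (n - m) = n + 1 := by omega
          have e2 : m - k + (n - m) = n - k := by omega
          rwa [e1, e2] at h
        have hge : (0:ℝ) ≤ a ^ k * (1 - a) :=
          mul_nonneg (pow_nonneg ha0 k) (by linarith)
        calc p (n+1) * (a ^ k * (1-a) * p (m - k))
            = (a ^ k * (1-a)) * (p (n+1) * p (m - k)) := by ring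
          _ ≤ (a ^ k * (1-a)) * (p (m+1) * p (n - k)) := by
              exact mul_le_mul_of_nonneg_left key hge
          _ = p (m+1) * (a ^ k * (1-a) * p (n - k)) := by ring
    _ ≤ ∑ k ∈ Finset.range (n+1), p (m+1) * (a ^ k * (1-a) * p (n - k)) := by
        refine Finset.sum_le_sum_of_subset_of_nonneg
          (by intro x hx; simp at hx ⊢; omega) fun k _ _ => ?_
        exact mul_nonneg (hp0 (m+1)) (mul_nonneg
          (mul_nonneg (pow_nonneg ha0 k) (by linarith)) (hp0 (n - k)))

private lemma convG_crossLC {a : ℝ} {p : ℕ → ℝ} (ha0 : 0 ≤ a) (ha1 : a ≤ 1)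
    (hp0 : ∀ k, 0 ≤ p k) (hp : CrossLC p) : CrossLC (convG a p) := by
  intro n m hmn
  rw [convG_succ, convG_succ]
  have h1 : p (n+1) * convG a p m ≤ p (m+1) * convG a p n :=
    convG_cross ha0 ha1 hp0 hp hmn
  have h2 : (0:ℝ) ≤ 1 - a := by linarith
  nlinarith [convG_nonneg ha0 ha1 hp0 m, convG_nonneg ha0 ha1 hp0 n]

private lemma measure_add_eq_sum {Ω : Type*} [MeasurableSpace Ω] (μ : Measure Ω)
    {X Z : Ω → ℕ} (hX : Measurable X) (hZ : Measurable Z) (h : IndepFun X Z μ) (t : ℕ) :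
    μ {ω | X ω + Z ω = t}
      = ∑ k ∈ Finset.range (t+1), μ {ω | X ω = k} * μ {ω | Z ω = t - k} := by
  have hset : {ω | X ω + Z ω = t}
      = ⋃ k ∈ Finset.range (t+1), ({ω | X ω = k} ∩ {ω | Z ω = t - k}) := by
    ext ω
    simp only [Set.mem_setOf_eq, Set.mem_iUnion, Set.mem_inter_iff, Finset.mem_range,
      Nat.lt_succ_iff]
    constructor
    · intro hω; exact ⟨X ω, by omega, rfl, by omega⟩
    · rintro ⟨k, hk, h1, h2⟩; omega
  rw [hset, measure_biUnion_finset]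
  · refine Finset.sum_congr rfl fun k _ => ?_
    have : {ω | X ω = k} = X ⁻¹' {k} := rfl
    have : {ω | Z ω = t - k} = Z ⁻¹' {t - k} := rfl
    exact h.measure_inter_preimage_eq_mul {k} {t - k}
      (measurableSet_singleton _) (measurableSet_singleton _)
  · intro i hi j hj hij
    refine Set.disjoint_left.mpr fun ω hωi hωj => ?_
    exact hij (hωi.1.symm.trans hωj.1)
  · intro k _
    exact (hX (measurableSet_singleton _)).inter (hZ (measurableSet_singleton _))

/-- The sum of finitely many independent geometric random variables (with possibly
different parameters `α i ∈ [0,1)`) has a log-concave distribution: for every integer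
`t ≥ 1`, `P(S = t+1) · P(S = t-1) ≤ P(S = t)^2`. -/
theorem sum_geometric_logConcave {Ω : Type*} [MeasurableSpace Ω]
    (μ : Measure Ω) [IsProbabilityMeasure μ]
    (d : ℕ) (α : Fin d → ℝ) (hα : ∀ i, 0 ≤ α i ∧ α i < 1)
    (Y : Fin d → Ω → ℕ) (hmeas : ∀ i, Measurable (Y i))
    (hindep : iIndepFun Y μ)
    (hgeom : ∀ i k, μ {ω | Y i ω = k} = ENNReal.ofReal ((α i) ^ k * (1 - α i))) :
    ∀ t : ℕ, 1 ≤ t →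
      μ {ω | (∑ i, Y i ω) = t + 1} * μ {ω | (∑ i, Y i ω) = t - 1} ≤
        (μ {ω | (∑ i, Y i ω) = t}) ^ 2 := by
  classical
  -- main induction over finsets
  have key : ∀ s : Finset (Fin d), ∃ p : ℕ → ℝ, (∀ k, 0 ≤ p k) ∧ CrossLC p ∧
      ∀ t, μ {ω | (∑ i ∈ s, Y i ω) = t} = ENNReal.ofReal (p t) := by
    intro s
    induction s using Finset.induction_on with
    | empty =>
      refine ⟨fun t => if t = 0 then 1 else 0, fun k => by dsimp only; split <;> norm_num, ?_, ?_⟩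
      · intro a b hba
        have h1 : (if a + 1 = 0 then (1:ℝ) else 0) = 0 := by simp
        simp only [h1, zero_mul]
        apply mul_nonneg <;> split <;> norm_num
      · intro t
        by_cases ht : t = 0
        · subst ht; simp
        · have hset : {ω : Ω | (∑ i ∈ (∅ : Finset (Fin d)), Y i ω) = t} = ∅ := by
            ext ω; simp; omega
          rw [hset]
          simp [ht]
    | @insert i s hi ih =>
      obtain ⟨p, hp0, hpLC, hpμ⟩ := ih
      refine ⟨convG (α i) p, fun k => convG_nonneg (hα i).1 (hα i).2.le hp0 k,
        convG_crossLC (hα i).1 (hα i).2.le hp0 hpLC, ?_⟩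
      intro t
      have hZmeas : Measurable (fun ω => ∑ j ∈ s, Y j ω) := by
        exact Finset.measurable_sum s fun j _ => hmeas j
      have hindep2 : IndepFun (Y i) (fun ω => ∑ j ∈ s, Y j ω) μ := by
        have := (hindep.indepFun_finsetSum_of_notMem hmeas hi).symm
        have he : (∑ j ∈ s, Y j) = fun ω => ∑ j ∈ s, Y j ω := by
          ext ω; simp [Finset.sum_apply]
        rwa [he] at this
      have hsum : {ω | (∑ j ∈ insert i s, Y j ω) = t}
          = {ω | Y i ω + (∑ j ∈ s, Y j ω) = t} := by
        ext ω; simp [Finset.sum_insert hi]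
      rw [hsum, measure_add_eq_sum μ (hmeas i) hZmeas hindep2 t]
      rw [convG, ENNReal.ofReal_sum_of_nonneg]
      · refine Finset.sum_congr rfl fun k _ => ?_
        rw [hgeom i k, hpμ (t - k),
          ← ENNReal.ofReal_mul (mul_nonneg (pow_nonneg (hα i).1 k) (by linarith [(hα i).2]))]
      · intro k _
        exact mul_nonneg (mul_nonneg (pow_nonneg (hα i).1 k)
          (by linarith [(hα i).2])) (hp0 (t - k))
  obtain ⟨p, hp0, hpLC, hpμ⟩ := key Finset.univ
  intro t ht
  rw [hpμ, hpμ, hpμ, ← ENNReal.ofReal_mul (hp0 _), ← ENNReal.ofReal_pow (hp0 _)]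
  refine ENNReal.ofReal_le_ofReal ?_
  have h := hpLC t (t - 1) (by omega)
  have e : t - 1 + 1 = t := by omega
  rw [e] at h
  calc p (t+1) * p (t-1) ≤ p t * p t := h
    _ = p t ^ 2 := by ring
end

section
/- Let X_1, ..., X_n be independent geometric random variables where X_i has parameter p_i, with means μ_i = p_i/(1-p_i), variances σ_i^2 = μ_i(1+μ_i), and set μ = ∑ μ_i, σ^2 = ∑ σ_i^2, μ_0 = max_i μ_i. Then for any t with 0 ≤ t ≤ (1 + 1/(2μ_0)) log(1 + 1/(2μ_0)), P(∑ X_i ≥ μ + 4tσ^2) ≤ exp(-2σ^2 · t · W_0(t)), where W_0 is the Lambert W function satisfying W_0(x)e^{W_0(x)} = x; and for t > (1 + 1/(2μ_0)) log(1 + 1/(2μ_0)), P(∑ X_i ≥ μ + 4tσ^2) ≤ (1 - 1/(1 + 2μ_0))^{2σ^2 t}. -/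
open MeasureTheory ProbabilityTheory

section auxx

private lemma aux_exp_sub_one {l : ℝ} : Real.exp l - 1 ≤ l * Real.exp l := by
  have h := Real.add_one_le_exp (-l)
  have h2 : (-l + 1) * Real.exp l ≤ Real.exp (-l) * Real.exp l :=
    mul_le_mul_of_nonneg_right h (Real.exp_pos l).le
  rw [← Real.exp_add, neg_add_cancel, Real.exp_zero] at h2
  nlinarith

private lemma aux_neg_log {x : ℝ} (h0 : 0 ≤ x) (h1 : x ≤ 1/2) :
    -Real.log (1 - x) ≤ x + x^2 := by
  set f : ℝ → ℝ := fun y => y + y^2 + Real.log (1 - y) with hf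
  have hderiv : ∀ y ∈ Set.Ioo (0:ℝ) (1/2), HasDerivAt f (1 + 2*y + (-1)/(1-y)) y := by
    intro y hy
    have hy1 : (1:ℝ) - y ≠ 0 := by nlinarith [hy.1, hy.2]
    have h1 : HasDerivAt (fun y : ℝ => 1 - y) (-1) y := by
      simpa using (hasDerivAt_id y).const_sub 1
    have h2 : HasDerivAt (fun y : ℝ => Real.log (1 - y)) ((-1)/(1-y)) y := by
      simpa [div_eq_mul_inv, mul_comm] using h1.log hy1
    have h3 : HasDerivAt (fun y : ℝ => y + y^2) (1 + 2*y) y := by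
      exact ((hasDerivAt_id' y).add (hasDerivAt_pow 2 y)).congr_deriv (by norm_num)
    exact h3.add h2
  have hmono : MonotoneOn f (Set.Icc (0:ℝ) (1/2)) := by
    have hint : interior (Set.Icc (0:ℝ) (1/2)) = Set.Ioo 0 (1/2) := interior_Icc
    apply monotoneOn_of_deriv_nonneg (convex_Icc _ _)
    · apply ContinuousOn.add (by fun_prop)
      apply ContinuousOn.log (by fun_prop)
      intro y hy
      nlinarith [hy.1, hy.2]
    · rw [hint]
      intro y hy
      exact (hderiv y hy).differentiableAt.differentiableWithinAt
    · rw [hint]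
      intro y hy
      rw [(hderiv y hy).deriv]
      have hy1 : (0:ℝ) < 1 - y := by nlinarith [hy.1, hy.2]
      rw [← sub_nonneg]
      have : 1 + 2*y + (-1)/(1-y) - 0 = (y * (1 - 2*y)) / (1 - y) := by
        field_simp; ring
      rw [this]
      exact div_nonneg (mul_nonneg hy.1.le (by nlinarith [hy.2])) hy1.le
  have := hmono (Set.mem_Icc.mpr ⟨le_refl 0, by norm_num⟩) (Set.mem_Icc.mpr ⟨h0, h1⟩) h0
  simp only [hf] at this
  simp at this
  linarith

private lemma aux_mgf_bound {p l : ℝ} (hp0 : 0 ≤ p) (hp1 : p < 1) (hl : 0 ≤ l)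
    (hc : p * Real.exp l ≤ (1 + p) / 2) :
    (1 - p) / (1 - p * Real.exp l) ≤
      Real.exp (p / (1 - p) * l +
        2 * (p / (1 - p) * (1 + p / (1 - p))) * l ^ 2 * Real.exp l) := by
  set u := Real.exp l with hu
  have hu1 : 1 ≤ u := by simpa [hu] using Real.one_le_exp hl
  have hup : 0 < u := lt_of_lt_of_le one_pos hu1
  have h1p : 0 < 1 - p := by linarith
  set m := p / (1 - p) with hm
  have hm0 : 0 ≤ m := div_nonneg hp0 h1p.le
  set x := m * (u - 1) with hx
  have hx0 : 0 ≤ x := mul_nonneg hm0 (by linarith)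
  have hx12 : x ≤ 1/2 := by
    rw [hx, hm, div_mul_eq_mul_div, div_le_iff₀ h1p]
    nlinarith
  have hpu : 1 - p * u > 0 := by nlinarith
  have hkey : (1 - p) / (1 - p * u) = (1 - x)⁻¹ := by
    rw [hx, hm]
    rw [eq_comm, inv_eq_iff_eq_inv, eq_comm, inv_div]
    field_simp
    ring
  rw [hkey]
  have h1x : 0 < 1 - x := by linarith
  have h2 : (1 - x)⁻¹ = Real.exp (-Real.log (1 - x)) := by
    rw [Real.exp_neg, Real.exp_log h1x]
  rw [h2]
  apply Real.exp_le_exp.mpr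
  have h3 := aux_neg_log hx0 hx12
  refine h3.trans ?_
  have hul : u - 1 ≤ l * u := by simpa [hu] using (aux_exp_sub_one (l := l))
  have hmu : m * u ≤ 1 + m := by
    rw [hm, div_mul_eq_mul_div, div_le_iff₀ h1p]
    have hd : p / (1 - p) * (1 - p) = p := div_mul_cancel₀ p h1p.ne'
    nlinarith [hd]
  have hx_le : x ≤ m * l + m * (l^2 * u) := by
    have h4 : u - 1 - l ≤ l * (u - 1) := by nlinarith
    have h5 : u - 1 ≤ l + l^2 * u := by nlinarith
    calc x = m * (u - 1) := hx
    _ ≤ m * (l + l^2 * u) := mul_le_mul_of_nonneg_left h5 hm0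
    _ = m * l + m * (l^2 * u) := by ring
  have hx2_le : x^2 ≤ m * (1 + m) * (l^2 * u) := by
    have hxlu : x ≤ m * (l * u) := by
      calc x = m * (u - 1) := hx
      _ ≤ m * (l * u) := mul_le_mul_of_nonneg_left hul hm0
    have h6 : x^2 ≤ (m*(l*u))^2 := by nlinarith [mul_nonneg hm0 (mul_nonneg hl hup.le)]
    have h7 : (m*(l*u))^2 = (m*u)*(m*(l^2*u)) := by ring
    have h8 : (m*u)*(m*(l^2*u)) ≤ (1+m)*(m*(l^2*u)) :=
      mul_le_mul_of_nonneg_right hmu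
        (mul_nonneg hm0 (mul_nonneg (sq_nonneg l) hup.le))
    calc x^2 ≤ (m*(l*u))^2 := h6
    _ = (m*u)*(m*(l^2*u)) := h7
    _ ≤ (1+m)*(m*(l^2*u)) := h8
    _ = m * (1+m) * (l^2*u) := by ring
  have h9 : m * (l^2*u) ≤ m * (1+m) * (l^2*u) := by
    nlinarith [mul_nonneg (mul_nonneg hm0 hm0) (mul_nonneg (sq_nonneg l) hup.le)]
  nlinarith [h9]

private lemma geom_mgf {Ω : Type*} [MeasurableSpace Ω] (μ : Measure Ω) [IsProbabilityMeasure μ]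
    {p : ℝ} (hp0 : 0 ≤ p) (hp1 : p < 1) {X : Ω → ℕ} (hX : Measurable X)
    (hg : ∀ k, μ {ω | X ω = k} = ENNReal.ofReal (p ^ k * (1 - p)))
    {l : ℝ} (hr : p * Real.exp l < 1) :
    Integrable (fun ω => Real.exp (l * (X ω : ℝ))) μ ∧
      ∫ ω, Real.exp (l * (X ω : ℝ)) ∂μ = (1 - p) / (1 - p * Real.exp l) := by
  set ν : Measure ℕ := μ.map X with hν
  have hνk : ∀ k, ν {k} = ENNReal.ofReal (p ^ k * (1 - p)) := by
    intro k
    rw [hν, Measure.map_apply hX (measurableSet_singleton k)]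
    exact hg k
  set f : ℕ → ℝ := fun k => Real.exp l ^ k with hfdef
  have hf0 : ∀ k, 0 ≤ f k := fun k => pow_nonneg (Real.exp_pos l).le k
  have hterm : ∀ k : ℕ, p ^ k * (1 - p) * f k = (p * Real.exp l) ^ k * (1 - p) := by
    intro k; simp only [hfdef, mul_pow]; ring
  have htermnn : ∀ k : ℕ, 0 ≤ (p * Real.exp l) ^ k * (1 - p) :=
    fun k => mul_nonneg (pow_nonneg (mul_nonneg hp0 (Real.exp_pos l).le) k) (by linarith)
  have hsum : Summable (fun k : ℕ => (p * Real.exp l) ^ k * (1 - p)) :=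
    (summable_geometric_of_lt_one (mul_nonneg hp0 (Real.exp_pos l).le) hr).mul_right _
  have hintf : Integrable f ν := by
    constructor
    · exact measurable_from_nat.aestronglyMeasurable
    · show (∫⁻ k, ‖f k‖₊ ∂ν) < ⊤
      rw [lintegral_countable']
      have heq : ∀ k : ℕ, (‖f k‖₊ : ENNReal) * ν {k}
          = ENNReal.ofReal ((p * Real.exp l) ^ k * (1 - p)) := by
        intro k
        rw [← enorm_eq_nnnorm, Real.enorm_eq_ofReal (hf0 k), hνk k, ← ENNReal.ofReal_mul (hf0 k)]
        congr 1
        rw [← hterm k]; ring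
      rw [tsum_congr heq, ← ENNReal.ofReal_tsum_of_nonneg htermnn hsum]
      exact ENNReal.ofReal_lt_top
  have hcomp : (fun ω => Real.exp (l * (X ω : ℝ))) = fun ω => f (X ω) := by
    funext ω
    simp only [hfdef]
    rw [mul_comm, Real.exp_nat_mul]
  have hint : Integrable (fun ω => Real.exp (l * (X ω : ℝ))) μ := by
    rw [hcomp]
    exact (integrable_map_measure measurable_from_nat.aestronglyMeasurable
      hX.aemeasurable).mp (by rw [← hν]; exact hintf)
  refine ⟨hint, ?_⟩
  have hchg : ∫ ω, Real.exp (l * (X ω : ℝ)) ∂μ = ∫ k, f k ∂ν := by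
    rw [hcomp, hν, integral_map hX.aemeasurable measurable_from_nat.aestronglyMeasurable]
  rw [hchg, integral_countable' hintf]
  have h1 : ∀ k : ℕ, (ν {k}).toReal • f k = (p * Real.exp l) ^ k * (1 - p) := by
    intro k
    rw [hνk k, smul_eq_mul, ENNReal.toReal_ofReal (mul_nonneg (pow_nonneg hp0 k) (by linarith))]
    exact hterm k
  rw [show (fun k => ν.real {k} • f k) = fun k => (p * Real.exp l) ^ k * (1 - p) from funext h1, tsum_mul_right,
    tsum_geometric_of_lt_one (mul_nonneg hp0 (Real.exp_pos l).le) hr]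
  rw [div_eq_mul_inv, mul_comm]

end auxx

/-- Tail bound for sums of independent geometric random variables, in terms of the
Lambert `W₀` function. With `μᵢ = pᵢ/(1-pᵢ)`, `σᵢ² = μᵢ(1+μᵢ)`, `μ = ∑ μᵢ`,
`σ² = ∑ σᵢ²` and `μ₀ = maxᵢ μᵢ`: for `0 ≤ t ≤ (1+1/(2μ₀))log(1+1/(2μ₀))`,
`P(∑ Xᵢ ≥ μ + 4tσ²) ≤ exp(-2σ²·t·W₀(t))`, and for larger `t`,
`P(∑ Xᵢ ≥ μ + 4tσ²) ≤ (1 - 1/(1+2μ₀))^(2σ²t)`. -/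
theorem geometric_sum_tail_bound {Ω : Type*} [MeasurableSpace Ω]
    (μ : Measure Ω) [IsProbabilityMeasure μ]
    (n : ℕ) (p : Fin n → ℝ) (hp : ∀ i, 0 ≤ p i ∧ p i < 1)
    (X : Fin n → Ω → ℕ) (hmeas : ∀ i, Measurable (X i))
    (hindep : iIndepFun X μ)
    (hgeom : ∀ i k, μ {ω | X i ω = k} = ENNReal.ofReal ((p i) ^ k * (1 - p i)))
    (W : ℝ → ℝ) (hW : ∀ x, 0 ≤ x → 0 ≤ W x ∧ W x * Real.exp (W x) = x)
    (μ₀ : ℝ) (hμ₀ : IsGreatest (Set.range fun i => p i / (1 - p i)) μ₀)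
    (t : ℝ) (ht : 0 ≤ t) :
    (t ≤ (1 + 1 / (2 * μ₀)) * Real.log (1 + 1 / (2 * μ₀)) →
      μ {ω | (∑ i, p i / (1 - p i)) +
          4 * t * (∑ i, (p i / (1 - p i)) * (1 + p i / (1 - p i))) ≤
          ∑ i, (X i ω : ℝ)} ≤
        ENNReal.ofReal
          (Real.exp (-(2 * (∑ i, (p i / (1 - p i)) * (1 + p i / (1 - p i))) * t * W t)))) ∧
    ((1 + 1 / (2 * μ₀)) * Real.log (1 + 1 / (2 * μ₀)) < t →
      μ {ω | (∑ i, p i / (1 - p i)) +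
          4 * t * (∑ i, (p i / (1 - p i)) * (1 + p i / (1 - p i))) ≤
          ∑ i, (X i ω : ℝ)} ≤
        ENNReal.ofReal
          ((1 - 1 / (1 + 2 * μ₀)) ^
            (2 * (∑ i, (p i / (1 - p i)) * (1 + p i / (1 - p i))) * t))) := by
  have h1p : ∀ i, 0 < 1 - p i := fun i => by linarith [(hp i).2]
  have hm0 : ∀ i, 0 ≤ p i / (1 - p i) := fun i => div_nonneg (hp i).1 (h1p i).le
  have hub : ∀ i, p i / (1 - p i) ≤ μ₀ := fun i => hμ₀.2 ⟨i, rfl⟩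
  have hμ₀0 : 0 ≤ μ₀ := by
    obtain ⟨i₀, hi₀⟩ := hμ₀.1
    exact hi₀ ▸ hm0 i₀
  set M := ∑ i, p i / (1 - p i) with hM
  set S2 := ∑ i, (p i / (1 - p i)) * (1 + p i / (1 - p i)) with hS2
  have hS2nn : 0 ≤ S2 :=
    Finset.sum_nonneg fun i _ => mul_nonneg (hm0 i) (by linarith [hm0 i])
  have hinv0 : 0 ≤ 1 / (2 * μ₀) := by positivity
  -- the per-index MGF condition
  have hcond : ∀ l : ℝ, Real.exp l ≤ 1 + 1 / (2 * μ₀) → ∀ i,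
      p i * Real.exp l ≤ (1 + p i) / 2 := by
    intro l hle i
    have h1 : p i * Real.exp l ≤ p i * (1 + 1 / (2 * μ₀)) :=
      mul_le_mul_of_nonneg_left hle (hp i).1
    rcases eq_or_lt_of_le hμ₀0 with h0 | h0
    · rw [← h0] at h1
      norm_num at h1
      nlinarith [(hp i).2]
    · have h2 : p i ≤ μ₀ * (1 - p i) := by
        have hq := (div_le_iff₀ (h1p i)).mp (hub i)
        linarith
      have h3 : p i * (1 + 1 / (2 * μ₀)) ≤ (1 + p i) / 2 := by
        have hd : p i / (2 * μ₀) * (2 * μ₀) = p i := div_mul_cancel₀ _ (by positivity)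
        rw [mul_add, mul_one, mul_one_div]
        nlinarith [hd, h2, h0, mul_pos h0 (h1p i)]
      linarith
  -- the key Chernoff bound
  have key : ∀ l : ℝ, 0 ≤ l → Real.exp l ≤ 1 + 1 / (2 * μ₀) →
      μ {ω | M + 4 * t * S2 ≤ ∑ i, (X i ω : ℝ)} ≤
        ENNReal.ofReal (Real.exp (2 * S2 * (l^2 * Real.exp l - 2 * t * l))) := by
    intro l hl hle
    have hcnd := hcond l hle
    have hri : ∀ i, p i * Real.exp l < 1 := fun i => by nlinarith [hcnd i, (hp i).2]
    set Y : Fin n → Ω → ℝ := fun i ω => ((X i ω : ℕ) : ℝ) with hY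
    have hYmeas : ∀ i, Measurable (Y i) := fun i => measurable_from_nat.comp (hmeas i)
    have hYindep : iIndepFun Y μ :=
      hindep.comp (fun _ => (Nat.cast : ℕ → ℝ)) (fun _ => measurable_from_nat)
    have hgi := fun i => geom_mgf μ (hp i).1 (hp i).2 (hmeas i) (hgeom i) (hri i)
    have hintsum : Integrable (fun ω => Real.exp (l * (∑ i, Y i) ω)) μ :=
      hYindep.integrable_exp_mul_sum hYmeas (fun i _ => (hgi i).1)
    have hset : {ω | M + 4 * t * S2 ≤ ∑ i, (X i ω : ℝ)}
        = {ω | M + 4 * t * S2 ≤ (∑ i, Y i) ω} := by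
      ext ω; simp [hY, Finset.sum_apply]
    have hch := measure_ge_le_exp_mul_mgf (μ := μ) (X := ∑ i, Y i)
      (M + 4 * t * S2) hl hintsum
    have hmgf : mgf (∑ i, Y i) μ l ≤ Real.exp (M * l + 2 * S2 * l^2 * Real.exp l) := by
      rw [hYindep.mgf_sum hYmeas]
      have hprod : ∏ i, mgf (Y i) μ l ≤
          ∏ i, Real.exp ((p i / (1 - p i)) * l +
            2 * ((p i / (1 - p i)) * (1 + p i / (1 - p i))) * l^2 * Real.exp l) := by
        apply Finset.prod_le_prod (fun i _ => mgf_nonneg)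
        intro i _
        have hval : mgf (Y i) μ l = (1 - p i) / (1 - p i * Real.exp l) := (hgi i).2
        rw [hval]
        exact aux_mgf_bound (hp i).1 (hp i).2 hl (hcnd i)
      refine hprod.trans_eq ?_
      rw [← Real.exp_sum]
      congr 1
      rw [Finset.sum_add_distrib, ← Finset.sum_mul, ← hM]
      congr 1
      rw [← Finset.sum_mul, ← Finset.sum_mul, ← Finset.mul_sum, ← hS2]
    have hfinal : (μ {ω | M + 4 * t * S2 ≤ ∑ i, (X i ω : ℝ)}).toReal ≤
        Real.exp (2 * S2 * (l^2 * Real.exp l - 2 * t * l)) := by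
      rw [hset]
      refine hch.trans ?_
      calc Real.exp (-l * (M + 4*t*S2)) * mgf (∑ i, Y i) μ l
          ≤ Real.exp (-l * (M + 4*t*S2)) * Real.exp (M * l + 2 * S2 * l^2 * Real.exp l) :=
            mul_le_mul_of_nonneg_left hmgf (Real.exp_pos _).le
        _ = Real.exp (2 * S2 * (l^2 * Real.exp l - 2 * t * l)) := by
            rw [← Real.exp_add]; congr 1; ring
    calc μ {ω | M + 4 * t * S2 ≤ ∑ i, (X i ω : ℝ)}
        = ENNReal.ofReal ((μ {ω | M + 4 * t * S2 ≤ ∑ i, (X i ω : ℝ)}).toReal) :=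
          (ENNReal.ofReal_toReal (measure_ne_top μ _)).symm
      _ ≤ _ := ENNReal.ofReal_le_ofReal hfinal
  have hLpos : (0:ℝ) < 1 + 1 / (2 * μ₀) := by linarith
  set L := Real.log (1 + 1 / (2 * μ₀)) with hL
  have hL0 : 0 ≤ L := Real.log_nonneg (by linarith)
  have heL : Real.exp L = 1 + 1 / (2 * μ₀) := Real.exp_log hLpos
  constructor
  · intro h1
    obtain ⟨hW0, hWe⟩ := hW t ht
    have hWle : Real.exp (W t) ≤ 1 + 1 / (2 * μ₀) := by
      rw [← heL, Real.exp_le_exp]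
      by_contra hc
      push_neg at hc
      have hlt : L * Real.exp L < W t * Real.exp (W t) := by
        have he : Real.exp L < Real.exp (W t) := Real.exp_lt_exp.mpr hc
        nlinarith [Real.exp_pos L]
      rw [hWe, heL] at hlt
      linarith
    refine (key (W t) hW0 hWle).trans_eq ?_
    congr 2
    have hsq : (W t)^2 * Real.exp (W t) = W t * t := by
      rw [pow_two, mul_assoc, hWe]
    rw [mul_sub, hsq]
    ring
  · intro h2
    rcases eq_or_lt_of_le hμ₀0 with h0 | h0
    · -- μ₀ = 0 : all p i = 0, S2 = 0, RHS = 1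
      have hpz : ∀ i, p i = 0 := by
        intro i
        have := hub i
        rw [← h0] at this
        have h5 := hm0 i
        have : p i / (1 - p i) = 0 := le_antisymm this h5
        rwa [div_eq_zero_iff, or_iff_left (h1p i).ne'] at this
      have hS2z : S2 = 0 := by
        rw [hS2]
        apply Finset.sum_eq_zero
        intro i _
        rw [hpz i]; norm_num
      rw [hS2z]
      norm_num
      exact prob_le_one
    · have hkey := key L hL0 heL.le
      have htL : L * Real.exp L ≤ t := by
        rw [heL]; nlinarith
      have hbase : 1 - 1 / (1 + 2 * μ₀) = Real.exp (-L) := by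
        rw [Real.exp_neg, heL]
        rw [eq_comm, inv_eq_iff_eq_inv]
        field_simp
        ring
      have hrpow : (1 - 1 / (1 + 2 * μ₀)) ^ (2 * S2 * t)
          = Real.exp (-L * (2 * S2 * t)) := by
        rw [hbase, ← Real.exp_mul]
      rw [hrpow]
      refine hkey.trans (ENNReal.ofReal_le_ofReal (Real.exp_le_exp.mpr ?_))
      have hfac : 0 ≤ 2 * S2 * L := by positivity
      nlinarith [mul_nonneg hfac (sub_nonneg.mpr htL)]
end

section
/- Let X be a geometric random variable with parameter p ∈ [0,1) and mean μ = p/(1-p) > 0. Then for any real 0 ≤ λ ≤ log(1 + 1/(2μ)), the centered moment generating function satisfies E[e^{λ(X - μ)}] ≤ exp(2σ^2 e^λ λ^2), where σ^2 = μ(1+μ) is the variance of X. -/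
set_option maxHeartbeats 1000000 in

/-- Centered MGF bound for a geometric random variable: if `X` is geometric with
parameter `p ∈ [0,1)`, mean `μ = p/(1-p) > 0` and variance `σ² = μ(1+μ)`, then for
`0 ≤ λ ≤ log(1 + 1/(2μ))` one has `E[e^{λ(X-μ)}] ≤ exp(2σ² e^λ λ²)`. -/
theorem geometric_centered_mgf_bound (p : ℝ) (hp0 : 0 ≤ p) (hp1 : p < 1)
    (hμ : 0 < p / (1 - p)) (l : ℝ) (hl0 : 0 ≤ l)
    (hl1 : l ≤ Real.log (1 + 1 / (2 * (p / (1 - p))))) :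
    (∑' k : ℕ, Real.exp (l * ((k : ℝ) - p / (1 - p))) * (p ^ k * (1 - p))) ≤
      Real.exp (2 * ((p / (1 - p)) * (1 + p / (1 - p))) * Real.exp l * l ^ 2) := by
  set μ := p / (1 - p) with hμdef
  have h1p : 0 < 1 - p := by linarith
  have hp : 0 < p := by
    rcases div_pos_iff.mp hμ with ⟨h1, h2⟩ | ⟨h1, h2⟩
    · exact h1
    · linarith
  have hμpos : 0 < μ := hμ
  have hE : Real.exp l ≤ 1 + 1 / (2 * μ) := by
    have h0 : 0 < 1 + 1 / (2 * μ) := by positivity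
    calc Real.exp l ≤ Real.exp (Real.log (1 + 1 / (2 * μ))) := Real.exp_le_exp.mpr hl1
      _ = 1 + 1 / (2 * μ) := Real.exp_log h0
  have hEl1 : 1 ≤ Real.exp l := Real.one_le_exp hl0
  have hEpos : 0 < Real.exp l := Real.exp_pos l
  have hμE : μ * Real.exp l ≤ μ + 1/2 := by
    have h1 := mul_le_mul_of_nonneg_left hE hμpos.le
    have h2 : μ * (1 + 1 / (2 * μ)) = μ + 1/2 := by field_simp
    linarith [h2 ▸ h1]
  have hpe : p * Real.exp l < 1 := by
    have h1 : 1 / (2 * μ) = (1 - p) / (2 * p) := by rw [hμdef]; field_simp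
    have h3 := mul_le_mul_of_nonneg_left hE hp.le
    have h2 : p * (1 + (1 - p) / (2 * p)) = (1 + p) / 2 := by field_simp; ring
    rw [h1, h2] at h3
    linarith
  have hterm : ∀ k : ℕ, Real.exp (l * ((k : ℝ) - μ)) * (p ^ k * (1 - p)) =
      (Real.exp (-(l * μ)) * (1 - p)) * (p * Real.exp l) ^ k := by
    intro k
    have h : l * ((k : ℝ) - μ) = (k : ℝ) * l + (-(l * μ)) := by ring
    rw [h, Real.exp_add, Real.exp_nat_mul, mul_pow]
    ring
  have hsum : (∑' k : ℕ, Real.exp (l * ((k : ℝ) - μ)) * (p ^ k * (1 - p))) =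
      Real.exp (-(l * μ)) * (1 - p) * (1 - p * Real.exp l)⁻¹ := by
    simp_rw [hterm]
    rw [tsum_mul_left, tsum_geometric_of_lt_one (by positivity) hpe]
  rw [hsum]
  set x := μ * (Real.exp l - 1) with hxdef
  have hx0 : 0 ≤ x := mul_nonneg hμpos.le (by linarith)
  have hxhalf : x ≤ 1/2 := by rw [hxdef]; nlinarith
  have h1x : 0 < 1 - x := by linarith
  have hfrac : (1 - p) * (1 - p * Real.exp l)⁻¹ = (1 - x)⁻¹ := by
    have h1 : 1 - x = (1 - p * Real.exp l) / (1 - p) := by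
      rw [hxdef, hμdef]; field_simp; ring
    rw [h1, inv_div, div_eq_mul_inv]
  have hel1 : Real.exp l - 1 ≤ l * Real.exp l := by
    have h := Real.add_one_le_exp (-l)
    have h2 : Real.exp (-l) * Real.exp l = 1 := by rw [← Real.exp_add]; simp
    nlinarith
  have hel2 : Real.exp l - 1 - l ≤ l^2 * Real.exp l := by
    have h := Real.add_one_le_exp (-l)
    have h2 : Real.exp (-l) * Real.exp l = 1 := by rw [← Real.exp_add]; simp
    have h3 : (1 - l) * (1 + l) ≤ Real.exp (-l) * (1 + l) :=
      mul_le_mul_of_nonneg_right (by linarith) (by linarith)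
    nlinarith
  have hlog : Real.log ((1 - x)⁻¹) ≤ x + 2 * x^2 := by
    have h := Real.log_le_sub_one_of_pos (inv_pos.mpr h1x)
    have h2 : (1 - x)⁻¹ - 1 = x / (1 - x) := by field_simp; ring
    have h3 : x / (1 - x) ≤ x + 2 * x^2 := by
      rw [div_le_iff₀ h1x]; nlinarith
    linarith [h2 ▸ h]
  -- make everything opaque polynomial data
  obtain ⟨E, hEd⟩ : ∃ E, Real.exp l = E := ⟨_, rfl⟩
  rw [hEd] at hEl1 hEpos hμE hel1 hel2 hxdef hfrac ⊢
  clear_value μ x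
  have hmain : -(l * μ) + (x + 2 * x^2) ≤ 2 * (μ * (1 + μ)) * E * l^2 := by
    have hxle : x ≤ μ * (l * E) := by
      rw [hxdef]; exact mul_le_mul_of_nonneg_left hel1 hμpos.le
    have hx2 : x^2 ≤ μ^2 * l^2 * E^2 := by
      calc x^2 ≤ (μ * (l * E))^2 := pow_le_pow_left₀ hx0 hxle 2
        _ = μ^2 * l^2 * E^2 := by ring
    have hq : μ^2 * E^2 ≤ (μ + 1/2) * (μ * E) := by nlinarith
    have hfirst : -(l * μ) + x ≤ μ * l^2 * E := by rw [hxdef]; nlinarith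
    nlinarith [sq_nonneg l, mul_nonneg (sq_nonneg l) hμpos.le,
      mul_le_mul_of_nonneg_left hq (sq_nonneg l)]
  calc Real.exp (-(l * μ)) * (1 - p) * (1 - p * E)⁻¹
      = Real.exp (-(l * μ)) * ((1 - x)⁻¹) := by rw [mul_assoc, hfrac]
    _ = Real.exp (-(l * μ) + Real.log ((1 - x)⁻¹)) := by
        rw [Real.exp_add, Real.exp_log (inv_pos.mpr h1x)]
    _ ≤ Real.exp (2 * (μ * (1 + μ)) * E * l^2) := by
        apply Real.exp_le_exp.mpr; linarith
end

section
/- Let ψ(λ) = log E[e^{λS}] be the cumulant generating function of a sum S of independent geometric random variables Y_1, ..., Y_d with parameters α_i, defined where all α_i e^λ < 1. Then ψ''(λ) ≥ ψ'(λ) for all λ in the domain. -/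
open MeasureTheory ProbabilityTheory

lemma geom_integral_exp {Ω : Type*} [MeasurableSpace Ω] (μ : Measure Ω) [IsProbabilityMeasure μ]
    (a : ℝ) (ha0 : 0 ≤ a) (Y : Ω → ℕ) (hY : Measurable Y)
    (hg : ∀ k, μ {ω | Y ω = k} = ENNReal.ofReal (a ^ k * (1 - a)))
    (x : ℝ) (hx : a * Real.exp x < 1) :
    ∫ ω, Real.exp (x * (Y ω : ℝ)) ∂μ = (1 - a) / (1 - a * Real.exp x) := by
  have hr0 : 0 ≤ a * Real.exp x := mul_nonneg ha0 (Real.exp_pos x).le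
  have ha1 : a < 1 := by
    by_contra h
    push_neg at h
    have hnull : ∀ k : ℕ, μ {ω | Y ω = k} = 0 := by
      intro k
      rw [hg k, ENNReal.ofReal_eq_zero]
      nlinarith [pow_nonneg ha0 k]
    have huniv : (Set.univ : Set Ω) = ⋃ k : ℕ, {ω | Y ω = k} := by
      ext ω; simp
    have : μ Set.univ = 0 := by
      rw [huniv]
      exact measure_iUnion_null hnull
    simp at this
  set ν := μ.map Y with hν
  have hνk : ∀ k : ℕ, ν {k} = ENNReal.ofReal (a ^ k * (1 - a)) := by
    intro k
    rw [hν, Measure.map_apply hY (measurableSet_singleton k)]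
    exact hg k
  have hmap : ∫ ω, Real.exp (x * (Y ω : ℝ)) ∂μ = ∫ n, Real.exp (x * (n : ℝ)) ∂ν := by
    rw [hν, integral_map hY.aemeasurable]
    exact (measurable_from_top (f := fun n : ℕ => Real.exp (x * n))).aestronglyMeasurable
  have hterm : ∀ k : ℕ, Real.exp (x * (k : ℝ)) = (Real.exp x) ^ k := by
    intro k; rw [← Real.exp_nat_mul, mul_comm]
  have hsummable : Summable (fun k : ℕ => (a * Real.exp x) ^ k) :=
    summable_geometric_of_lt_one hr0 hx
  have hint : Integrable (fun n : ℕ => Real.exp (x * (n : ℝ))) ν := by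
    refine ⟨(measurable_from_top).aestronglyMeasurable, ?_⟩
    rw [hasFiniteIntegral_iff_ofReal (Filter.Eventually.of_forall fun n => (Real.exp_pos _).le)]
    rw [lintegral_countable']
    have : ∀ k : ℕ, ENNReal.ofReal (Real.exp (x * (k : ℝ))) * ν {k}
        = ENNReal.ofReal ((a * Real.exp x) ^ k * (1 - a)) := by
      intro k
      rw [hνk k, hterm k, ← ENNReal.ofReal_mul (pow_nonneg (Real.exp_pos _).le k)]
      congr 1
      ring
    rw [tsum_congr this, ← ENNReal.ofReal_tsum_of_nonneg
      (fun k => mul_nonneg (pow_nonneg hr0 k) (by linarith)) (hsummable.mul_right _)]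
    exact ENNReal.ofReal_lt_top
  rw [hmap, integral_countable' hint]
  have : ∀ k : ℕ, ν.real {k} • Real.exp (x * (k : ℝ)) = (1 - a) * (a * Real.exp x) ^ k := by
    intro k
    rw [measureReal_def, hνk k, ENNReal.toReal_ofReal (mul_nonneg (pow_nonneg ha0 k) (by linarith)),
      hterm k, smul_eq_mul]
    ring
  rw [tsum_congr this, tsum_mul_left, tsum_geometric_of_lt_one hr0 hx,
    div_eq_mul_inv]
open MeasureTheory ProbabilityTheory Real

/-- For the cumulant generating function `ψ(λ) = log E[e^{λS}]` of a sum `S` of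
independent geometric random variables with parameters `αᵢ`, one has
`ψ''(λ) ≥ ψ'(λ)` wherever all `αᵢ e^λ < 1`. -/
theorem cgf_second_deriv_ge_first {Ω : Type*} [MeasurableSpace Ω]
    (μ : Measure Ω) [IsProbabilityMeasure μ]
    (d : ℕ) (α : Fin d → ℝ) (hα : ∀ i, 0 ≤ α i ∧ α i < 1)
    (Y : Fin d → Ω → ℕ) (hmeas : ∀ i, Measurable (Y i))
    (hindep : iIndepFun Y μ)
    (hgeom : ∀ i k, μ {ω | Y i ω = k} = ENNReal.ofReal ((α i) ^ k * (1 - α i)))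
    (lam : ℝ) (hdom : ∀ i, α i * Real.exp lam < 1) :
    deriv (fun x => Real.log (∫ ω, Real.exp (x * ∑ i, (Y i ω : ℝ)) ∂μ)) lam ≤
      deriv (deriv (fun x => Real.log (∫ ω, Real.exp (x * ∑ i, (Y i ω : ℝ)) ∂μ))) lam := by
  classical
  set U : Set ℝ := {x | ∀ i, α i * Real.exp x < 1} with hU
  have hUopen : IsOpen U := by
    have : U = ⋂ i, {x | α i * Real.exp x < 1} := by ext x; simp [hU]
    rw [this]
    exact isOpen_iInter_of_finite fun i =>
      isOpen_lt (continuous_const.mul Real.continuous_exp) continuous_const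
  have hUmem : U ∈ nhds lam := hUopen.mem_nhds hdom
  -- product formula on U
  have hprod : ∀ x ∈ U, (∫ ω, Real.exp (x * ∑ i, (Y i ω : ℝ)) ∂μ)
      = ∏ i, (1 - α i) / (1 - α i * Real.exp x) := by
    intro x hx
    have hindepX : iIndepFun (fun i => fun ω => ((Y i ω : ℝ))) μ :=
      hindep.comp (fun i (n : ℕ) => (n : ℝ)) (fun i => measurable_from_top)
    have hmeasX : ∀ i, Measurable (fun ω => ((Y i ω : ℝ))) := fun i =>
      measurable_from_top.comp (hmeas i)
    have h1 : (∫ ω, Real.exp (x * ∑ i, (Y i ω : ℝ)) ∂μ)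
        = mgf (∑ i, fun ω => ((Y i ω : ℝ))) μ x := by
      rw [mgf]
      congr 1
      ext ω
      simp [Finset.sum_apply]
    rw [h1, hindepX.mgf_sum hmeasX]
    refine Finset.prod_congr rfl fun i _ => ?_
    rw [mgf]
    exact geom_integral_exp μ (α i) (hα i).1 (Y i) (hmeas i) (hgeom i) x (hx i)
  -- the explicit cgf
  set g : ℝ → ℝ := fun x => ∑ i, (Real.log (1 - α i) - Real.log (1 - α i * Real.exp x)) with hg
  have hpos : ∀ (i : Fin d) (x : ℝ), x ∈ U → 0 < 1 - α i * Real.exp x := by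
    intro i x hx; linarith [hx i]
  have hfg : (fun x => Real.log (∫ ω, Real.exp (x * ∑ i, (Y i ω : ℝ)) ∂μ)) =ᶠ[nhds lam] g := by
    filter_upwards [hUmem] with x hx
    rw [hprod x hx, hg]
    rw [Real.log_prod (fun i _ => by
      have := hpos i x hx
      have h2 : (0:ℝ) < 1 - α i := by linarith [(hα i).2]
      positivity)]
    refine Finset.sum_congr rfl fun i _ => ?_
    rw [Real.log_div (by linarith [(hα i).2]) (ne_of_gt (hpos i x hx))]
  -- first derivative of g on U
  set g1 : ℝ → ℝ := fun x => ∑ i, α i * Real.exp x / (1 - α i * Real.exp x) with hg1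
  have hderiv_g : ∀ x ∈ U, HasDerivAt g (g1 x) x := by
    intro x hx
    rw [hg, hg1]
    refine HasDerivAt.fun_sum fun i _ => ?_
    have hinner : HasDerivAt (fun y => 1 - α i * Real.exp y) (-(α i * Real.exp x)) x :=
      ((Real.hasDerivAt_exp x).const_mul (α i)).const_sub 1
    have hlog : HasDerivAt (fun y => Real.log (1 - α i * Real.exp y))
        (-(α i * Real.exp x) / (1 - α i * Real.exp x)) x :=
      hinner.log (ne_of_gt (hpos i x hx))
    have := (hasDerivAt_const x (Real.log (1 - α i))).sub hlog
    have heq : 0 - -(α i * Real.exp x) / (1 - α i * Real.exp x)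
        = α i * Real.exp x / (1 - α i * Real.exp x) := by ring
    rwa [heq] at this
  -- second derivative of g at lam
  have hderiv_g1 : HasDerivAt g1 (∑ i, α i * Real.exp lam / (1 - α i * Real.exp lam) ^ 2) lam := by
    rw [hg1]
    refine HasDerivAt.fun_sum fun i _ => ?_
    have hnum : HasDerivAt (fun y => α i * Real.exp y) (α i * Real.exp lam) lam :=
      (Real.hasDerivAt_exp lam).const_mul (α i)
    have hden : HasDerivAt (fun y => 1 - α i * Real.exp y) (-(α i * Real.exp lam)) lam :=
      ((Real.hasDerivAt_exp lam).const_mul (α i)).const_sub 1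
    have h := hnum.div hden (ne_of_gt (hpos i lam hdom))
    have heq : (α i * Real.exp lam * (1 - α i * Real.exp lam) -
        α i * Real.exp lam * -(α i * Real.exp lam)) / (1 - α i * Real.exp lam) ^ 2
        = α i * Real.exp lam / (1 - α i * Real.exp lam) ^ 2 := by
      have hne : (1 - α i * Real.exp lam) ≠ 0 := ne_of_gt (hpos i lam hdom)
      field_simp
      ring
    rwa [heq] at h
  -- transfer derivatives
  have hd1 : deriv (fun x => Real.log (∫ ω, Real.exp (x * ∑ i, (Y i ω : ℝ)) ∂μ)) lam
      = g1 lam := by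
    rw [hfg.deriv_eq]
    exact (hderiv_g lam hdom).deriv
  have hdgU : deriv g =ᶠ[nhds lam] g1 := by
    filter_upwards [hUmem] with x hx
    exact (hderiv_g x hx).deriv
  have hd2 : deriv (deriv (fun x => Real.log (∫ ω, Real.exp (x * ∑ i, (Y i ω : ℝ)) ∂μ))) lam
      = ∑ i, α i * Real.exp lam / (1 - α i * Real.exp lam) ^ 2 := by
    rw [(hfg.deriv).deriv_eq, hdgU.deriv_eq]
    exact hderiv_g1.deriv
  rw [hd1, hd2, hg1]
  refine Finset.sum_le_sum fun i _ => ?_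
  have hp := hpos i lam hdom
  have ht0 : 0 ≤ α i * Real.exp lam := mul_nonneg (hα i).1 (Real.exp_pos lam).le
  rw [div_le_div_iff₀ hp (by positivity)]
  nlinarith [sq_nonneg (α i * Real.exp lam)]
end
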